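/- The group G = F_2^{n-1} ⋊_φ D_{2n} is generated by the three elements ρ_0 = (0,h_0), ρ_1 = (0,h_1), and ρ_2 = ((0,...,0,1)^T, h_0). -/

import Mathlib

open Matrix DihedralGroup

/-- The matrix `U` of Lemma 3: (0-indexed) row `i` has a 1 at column `n-3-i` for
`i ≤ n-3`, and the last row is all ones. -/
def Umat (n : ℕ) : Matrix (Fin (n-1)) (Fin (n-1)) (ZMod 2) :=
  Matrix.of fun i j =>
    if (i : ℕ) = n - 2 then 1 else if (i : ℕ) + (j : ℕ) = n - 3 then 1 else 0

/-- The anti-diagonal permutation matrix `V` of Lemma 3. -/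
def Vmat (n : ℕ) : Matrix (Fin (n-1)) (Fin (n-1)) (ZMod 2) :=
  Matrix.of fun i j => if (i : ℕ) + (j : ℕ) = n - 2 then 1 else 0

/-- u = (0,…,0,1)ᵀ ∈ F₂^{n-1}. -/
def uVec (n : ℕ) : Fin (n-1) → ZMod 2 := fun i => if (i : ℕ) = n - 2 then 1 else 0

/-- v = Vu = (1,0,…,0)ᵀ ∈ F₂^{n-1}. -/
def vVec (n : ℕ) : Fin (n-1) → ZMod 2 := fun i => if (i : ℕ) = 0 then 1 else 0

/-- The multiplicative group structure on `AddAut A` (composition), as in the older Mathlib. -/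
instance AddAut.oldGroup (A : Type*) [Add A] : Group (AddAut A) where
  mul g h := AddEquiv.trans h g
  one := AddEquiv.refl _
  inv := AddEquiv.symm
  mul_assoc _ _ _ := rfl
  one_mul _ := rfl
  mul_one _ := rfl
  inv_mul_cancel := AddEquiv.self_trans_symm

/-- The action of `D_{2n}` on `F₂^{n-1}` (written multiplicatively) induced by a
representation `φ : D_{2n} → Aut(F₂^{n-1})`. -/
def dihAct (n : ℕ) (φ : DihedralGroup n →* AddAut (Fin (n-1) → ZMod 2)) :
    DihedralGroup n →* MulAut (Multiplicative (Fin (n-1) → ZMod 2)) where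
  toFun x := AddEquiv.toMultiplicative (φ x)
  map_one' := by ext w; rw [map_one]; rfl
  map_mul' x y := by ext w; rw [map_mul]; rfl

/-- The semidirect product `G = F₂^{n-1} ⋊_φ D_{2n}`. -/
abbrev Gsd (n : ℕ) (φ : DihedralGroup n →* AddAut (Fin (n-1) → ZMod 2)) :=
  Multiplicative (Fin (n-1) → ZMod 2) ⋊[dihAct n φ] DihedralGroup n

/-- `ρ₀ = (0, h₀)`, where `h₀ = sr 0`. -/
def rho0 (n : ℕ) (φ : DihedralGroup n →* AddAut (Fin (n-1) → ZMod 2)) : Gsd n φ :=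
  ⟨Multiplicative.ofAdd 0, sr 0⟩

/-- `ρ₁ = (0, h₁)`, where `h₁ = sr 1`. -/
def rho1 (n : ℕ) (φ : DihedralGroup n →* AddAut (Fin (n-1) → ZMod 2)) : Gsd n φ :=
  ⟨Multiplicative.ofAdd 0, sr 1⟩

/-- `ρ₂ = (u, h₀)`, where `u = (0,…,0,1)ᵀ`. -/
def rho2 (n : ℕ) (φ : DihedralGroup n →* AddAut (Fin (n-1) → ZMod 2)) : Gsd n φ :=
  ⟨Multiplicative.ofAdd (uVec n), sr 0⟩

lemma dih_gen (n : ℕ) (hn : n ≠ 0) :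
    Subgroup.closure {sr (0 : ZMod n), sr 1} = ⊤ := by
  haveI : NeZero n := ⟨hn⟩
  rw [eq_top_iff]
  intro x _
  have h0 : sr (0 : ZMod n) ∈ Subgroup.closure {sr (0 : ZMod n), sr 1} :=
    Subgroup.subset_closure (by simp)
  have h1 : sr (1 : ZMod n) ∈ Subgroup.closure {sr (0 : ZMod n), sr 1} :=
    Subgroup.subset_closure (by simp)
  have hr1 : r (1 : ZMod n) ∈ Subgroup.closure {sr (0 : ZMod n), sr 1} := by
    have := mul_mem h0 h1
    rwa [sr_mul_sr, sub_zero] at this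
  have hr : ∀ i : ZMod n, r i ∈ Subgroup.closure {sr (0 : ZMod n), sr 1} := by
    intro i
    have := pow_mem hr1 i.val
    rwa [r_one_pow, ZMod.natCast_val, ZMod.cast_id] at this
  cases x with
  | r i => exact hr i
  | sr i =>
    have := mul_mem h0 (hr i)
    rwa [sr_mul_r, zero_add] at this

/-- G = F2^{n-1} ⋊_φ D_{2n} is generated by ρ0, ρ1, ρ2. -/
theorem stmt_13 (n : ℕ) (hn : 3 ≤ n)
    (φ : DihedralGroup n →* AddAut (Fin (n-1) → ZMod 2))
    (hφ0 : ∀ w, φ (sr 0) w = (Umat n).mulVec w)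
    (hφ1 : ∀ w, φ (sr 1) w = (Vmat n).mulVec w) :
    Subgroup.closure {rho0 n φ, rho1 n φ, rho2 n φ} = (⊤ : Subgroup (Gsd n φ)) := by
  set H := Subgroup.closure {rho0 n φ, rho1 n φ, rho2 n φ} with hH
  have h0 : rho0 n φ ∈ H := Subgroup.subset_closure (by simp)
  have h1 : rho1 n φ ∈ H := Subgroup.subset_closure (by simp)
  have h2 : rho2 n φ ∈ H := Subgroup.subset_closure (by simp)
  -- rho0 and rho1 are inr of the dihedral generators
  have e0 : rho0 n φ = SemidirectProduct.inr (sr 0) := by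
    refine SemidirectProduct.ext ?_ rfl
    simp [rho0]
  have e1 : rho1 n φ = SemidirectProduct.inr (sr 1) := by
    refine SemidirectProduct.ext ?_ rfl
    simp [rho1]
  have hinr : ∀ x : DihedralGroup n,
      (SemidirectProduct.inr x : Gsd n φ) ∈ H := by
    intro x
    have hle : Subgroup.closure {sr (0 : ZMod n), sr 1} ≤
        H.comap (SemidirectProduct.inr (φ := dihAct n φ)) := by
      rw [Subgroup.closure_le]
      rintro y (rfl | rfl)
      · simp only [SetLike.mem_coe, Subgroup.mem_comap]; rw [← e0]; exact h0
      · simp only [SetLike.mem_coe, Subgroup.mem_comap]; rw [← e1]; exact h1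
    exact hle (by rw [dih_gen n (by omega)]; trivial)
  -- the set of vectors w with (w,1) ∈ H
  set P : (Fin (n-1) → ZMod 2) → Prop :=
    fun w => (SemidirectProduct.inl (Multiplicative.ofAdd w) : Gsd n φ) ∈ H with hP
  have hP0 : P 0 := by
    show _ ∈ H
    rw [ofAdd_zero, _root_.map_one]
    exact one_mem H
  have hPadd : ∀ w w', P w → P w' → P (w + w') := by
    intro w w' hw hw'
    show _ ∈ H
    rw [ofAdd_add, _root_.map_mul]
    exact mul_mem hw hw'
  have hPact : ∀ w, P w → ∀ x, P (φ x w) := by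
    intro w hw x
    show _ ∈ H
    have : (Multiplicative.ofAdd (φ x w)) = (dihAct n φ) x (Multiplicative.ofAdd w) := rfl
    rw [this, SemidirectProduct.inl_aut]
    exact mul_mem (mul_mem (hinr x) hw) (hinr x⁻¹)
  -- u ∈ P
  have hPu : P (uVec n) := by
    have := mul_mem h2 h0
    have e : rho2 n φ * rho0 n φ =
        (SemidirectProduct.inl (Multiplicative.ofAdd (uVec n)) : Gsd n φ) := by
      refine SemidirectProduct.ext ?_ ?_
      · simp [rho2, rho0]
      · show (sr (0 : ZMod n) * sr 0 : DihedralGroup n) = 1; rw [sr_mul_sr, sub_zero, one_def]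
    rwa [e] at this
  have hu_eq : uVec n = Pi.single (⟨n - 2 - 0, by omega⟩ : Fin (n-1)) 1 := by
    funext i
    rw [Pi.single_apply, uVec]
    simp only [Fin.ext_iff]
    split_ifs <;> first | rfl | (exfalso; omega)
  have hbase : P (Pi.single (⟨n - 2 - 0, by omega⟩ : Fin (n-1)) 1) := hu_eq ▸ hPu
  -- basis vectors
  have hsingle : ∀ k : ℕ, k ≤ n - 2 →
      P (Pi.single (⟨n - 2 - k, by omega⟩ : Fin (n-1)) 1) := by
    intro k
    induction k with
    | zero =>
      intro _
      have : uVec n = Pi.single (⟨n - 2 - 0, by omega⟩ : Fin (n-1)) 1 := by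
        funext i
        rw [Pi.single_apply, uVec]
        simp only [Fin.ext_iff]
        split_ifs with h1' h2' h2' <;> first | rfl | omega
      exact this ▸ hPu
    | succ k ih =>
      intro hk
      have ihk := ih (by omega)
      -- apply V
      have hV : φ (sr 1) (Pi.single (⟨n - 2 - k, by omega⟩ : Fin (n-1)) 1)
          = Pi.single (⟨k, by omega⟩ : Fin (n-1)) 1 := by
        rw [hφ1, mulVec_single_one]
        funext i
        rw [Pi.single_apply]
        simp only [Vmat, Matrix.col_apply, Matrix.of_apply, Fin.ext_iff]
        split_ifs <;> first | rfl | (exfalso; omega)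
      have hk' : P (Pi.single (⟨k, by omega⟩ : Fin (n-1)) 1) := by
        rw [← hV]; exact hPact _ ihk (sr 1)
      -- apply U
      have hU : φ (sr 0) (Pi.single (⟨k, by omega⟩ : Fin (n-1)) 1)
          = Pi.single (⟨n - 2 - (k+1), by omega⟩ : Fin (n-1)) 1
            + Pi.single (⟨n - 2 - 0, by omega⟩ : Fin (n-1)) 1 := by
        rw [hφ0, mulVec_single_one]
        funext i
        simp only [Pi.add_apply, Pi.single_apply]
        simp only [Umat, Matrix.col_apply, Matrix.of_apply, Fin.ext_iff]
        split_ifs <;> first | (exfalso; omega) | decide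
      have hU' : P (Pi.single (⟨n - 2 - (k+1), by omega⟩ : Fin (n-1)) 1
            + Pi.single (⟨n - 2 - 0, by omega⟩ : Fin (n-1)) 1) := by
        rw [← hU]; exact hPact _ hk' (sr 0)
      have := hPadd
        (Pi.single (⟨n - 2 - (k+1), by omega⟩ : Fin (n-1)) 1
            + Pi.single (⟨n - 2 - 0, by omega⟩ : Fin (n-1)) 1)
        (Pi.single (⟨n - 2 - 0, by omega⟩ : Fin (n-1)) 1) hU' hbase
      have e2 : ((Pi.single (⟨n - 2 - (k+1), by omega⟩ : Fin (n-1)) 1 : Fin (n-1) → ZMod 2)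
            + (Pi.single (⟨n - 2 - 0, by omega⟩ : Fin (n-1)) 1 : Fin (n-1) → ZMod 2))
            + (Pi.single (⟨n - 2 - 0, by omega⟩ : Fin (n-1)) 1 : Fin (n-1) → ZMod 2)
          = (Pi.single (⟨n - 2 - (k+1), by omega⟩ : Fin (n-1)) 1 : Fin (n-1) → ZMod 2) := by
        funext i
        simp only [Pi.add_apply]
        have h2' : ∀ a b : ZMod 2, a + b + b = a := by decide
        exact h2' _ _
      rw [← e2]
      exact this
  have hall : ∀ j : Fin (n-1), P (Pi.single j 1) := by
    intro j
    have hj : (j : ℕ) ≤ n - 2 := by omega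
    have := hsingle (n - 2 - j) (by omega)
    have e : (⟨n - 2 - (n - 2 - (j : ℕ)), by omega⟩ : Fin (n-1)) = j := by
      simp [Fin.ext_iff]; omega
    rwa [e] at this
  have hPall : ∀ w, P w := by
    intro w
    have hw : w = ∑ j, Pi.single j (w j) := (Finset.univ_sum_single w).symm
    rw [hw]
    have : ∀ s : Finset (Fin (n-1)), P (∑ j ∈ s, Pi.single j (w j)) := by
      intro s
      induction s using Finset.induction with
      | empty => simpa using hP0
      | insert _ _ hx ih =>
        rw [Finset.sum_insert hx]
        refine hPadd _ _ ?_ ih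
        rcases (by decide : ∀ a : ZMod 2, a = 0 ∨ a = 1) (w _) with h | h
        · rw [h, Pi.single_zero]; exact hP0
        · rw [h]; exact hall _
    exact this _
  rw [eq_top_iff]
  intro g _
  rw [← SemidirectProduct.inl_left_mul_inr_right g]
  refine mul_mem ?_ (hinr g.right)
  have := hPall (Multiplicative.toAdd g.left)
  exact this
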